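/- Let A be a C-hyperideal of a commutative multiplicative hyperring G and S an MCS of G with A ∩ S = ∅. Then A is a quasi S-primary hyperideal of G if and only if there exists t ∈ S such that for all u₁,…,u_k ∈ G, if u₁∘⋯∘u_k ⊆ A, then t∘u_j ⊆ rad(A) for some 1 ≤ j ≤ k. -/

import Mathlib

open Set

/-- A commutative multiplicative hyperring: a commutative additive group with a
commutative, associative hyperoperation `hmul` satisfying `(-a)∘b = -(a∘b)`,
weak distributivity, and having an identity element `e` with `a ∈ e∘a`. -/
class MulHyperring (G : Type*) extends AddCommGroup G where
  hmul : G → G → Set G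
  hmul_nonempty : ∀ a b : G, (hmul a b).Nonempty
  hmul_comm : ∀ a b : G, hmul a b = hmul b a
  hmul_assoc : ∀ a b c : G, (⋃ x ∈ hmul a b, hmul x c) = ⋃ x ∈ hmul b c, hmul a x
  neg_hmul : ∀ a b : G, hmul (-a) b = (fun x => -x) '' (hmul a b)
  hmul_add : ∀ a b c : G,
    hmul a (b + c) ⊆ {x | ∃ u ∈ hmul a b, ∃ v ∈ hmul a c, x = u + v}
  e : G
  e_mem : ∀ a : G, a ∈ hmul e a

namespace MulHyperring

variable {G : Type*} [MulHyperring G]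

/-- Hyperproduct of an element with a set: `a ∘ B = ⋃ b ∈ B, a ∘ b`. -/
def smulSet (a : G) (B : Set G) : Set G := ⋃ b ∈ B, hmul a b

/-- Hyperproduct of two sets. -/
def setMul (A B : Set G) : Set G := ⋃ a ∈ A, ⋃ b ∈ B, hmul a b

/-- Hyperproduct `a₁ ∘ a₂ ∘ ⋯ ∘ aₙ` of a (nonempty) list of elements. -/
def hProd : List G → Set G
  | [] => ∅
  | [a] => {a}
  | a :: b :: l => smulSet a (hProd (b :: l))

/-- `aⁿ` as a hyperproduct. -/
def hPow (a : G) (n : ℕ) : Set G := hProd (List.replicate n a)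

/-- `A` is a hyperideal of `G`. -/
def IsHyperideal (A : Set G) : Prop :=
  A.Nonempty ∧ (∀ x ∈ A, ∀ y ∈ A, x - y ∈ A) ∧ ∀ r : G, ∀ x ∈ A, hmul r x ⊆ A

/-- `A` is a `C`-hyperideal: any finite hyperproduct meeting `A` is contained in `A`. -/
def IsCHyperideal (A : Set G) : Prop :=
  IsHyperideal A ∧ ∀ l : List G, l ≠ [] → (hProd l ∩ A).Nonempty → hProd l ⊆ A

/-- The radical of a (C-)hyperideal: `{a | aⁿ ⊆ A for some n ≥ 1}`. -/
def rad (A : Set G) : Set G := {a | ∃ n : ℕ, 1 ≤ n ∧ hPow a n ⊆ A}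

/-- The hyperideal generated by a set. -/
def idealGen (X : Set G) : Set G := ⋂₀ {A | IsHyperideal A ∧ X ⊆ A}

/-- The hyperideal product of two hyperideals. -/
def idealMul (A B : Set G) : Set G := idealGen (setMul A B)

/-- Multiplicative closed subset. -/
def IsMCS (S : Set G) : Prop :=
  e ∈ S ∧ ∀ s₁ ∈ S, ∀ s₂ ∈ S, (hmul s₁ s₂ ∩ S).Nonempty

/-- Prime hyperideal. -/
def IsPrime (P : Set G) : Prop :=
  IsHyperideal P ∧ P ≠ univ ∧ ∀ x y : G, hmul x y ⊆ P → x ∈ P ∨ y ∈ P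

/-- `S`-prime hyperideal. -/
def IsSPrime (S A : Set G) : Prop :=
  IsHyperideal A ∧ A ∩ S = ∅ ∧
    ∃ t ∈ S, ∀ u v : G, hmul u v ⊆ A → hmul t u ⊆ A ∨ hmul t v ⊆ A

/-- `S`-primary hyperideal. -/
def IsSPrimary (S A : Set G) : Prop :=
  IsHyperideal A ∧ A ∩ S = ∅ ∧
    ∃ t ∈ S, ∀ u v : G, hmul u v ⊆ A → hmul t u ⊆ A ∨ hmul t v ⊆ rad A

/-- Quasi `S`-primary hyperideal. -/
def IsQuasiSPrimary (S A : Set G) : Prop :=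
  IsHyperideal A ∧ A ∩ S = ∅ ∧
    ∃ t ∈ S, ∀ u v : G, hmul u v ⊆ A → hmul t u ⊆ rad A ∨ hmul t v ⊆ rad A

/-- Weakly quasi `S`-primary hyperideal. -/
def IsWeaklyQuasiSPrimary (S A : Set G) : Prop :=
  IsHyperideal A ∧ A ∩ S = ∅ ∧
    ∃ t ∈ S, ∀ u v : G, 0 ∉ hmul u v → hmul u v ⊆ A →
      hmul t u ⊆ rad A ∨ hmul t v ⊆ rad A

/-- Strongly quasi `S`-primary hyperideal. -/
def IsStronglyQuasiSPrimary (S A : Set G) : Prop :=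
  IsHyperideal A ∧ A ∩ S = ∅ ∧
    ∃ t ∈ S, ∀ u v : G, hmul u v ⊆ A →
      smulSet t (hPow u 2) ⊆ A ∨ hmul t v ⊆ rad A

/-- The residual `(B : x) = {y | y ∘ x ⊆ B}`. -/
def colon (B : Set G) (x : G) : Set G := {y | hmul y x ⊆ B}

end MulHyperring


section Aux

open MulHyperring List

variable {G : Type*} [MulHyperring G]

lemma mem_smulSet {a y : G} {X : Set G} : y ∈ smulSet a X ↔ ∃ x ∈ X, y ∈ hmul a x := by
  simp [smulSet]

lemma smulSet_subset_iff {a : G} {X Z : Set G} :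
    smulSet a X ⊆ Z ↔ ∀ x ∈ X, hmul a x ⊆ Z := by
  simp [smulSet, Set.iUnion₂_subset_iff]

lemma smulSet_mono {a : G} {X Y : Set G} (h : X ⊆ Y) : smulSet a X ⊆ smulSet a Y := by
  rw [smulSet_subset_iff]
  intro x hx
  exact fun w hw => mem_smulSet.mpr ⟨x, h hx, hw⟩

lemma hmul_subset_smulSet {a x : G} {X : Set G} (hx : x ∈ X) : hmul a x ⊆ smulSet a X :=
  fun w hw => mem_smulSet.mpr ⟨x, hx, hw⟩

lemma smulSet_singleton (a b : G) : smulSet a {b} = hmul a b := by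
  ext w; simp [mem_smulSet]

lemma smulSet_hmul_rotate (a b c : G) : smulSet a (hmul b c) = smulSet c (hmul a b) := by
  have h := hmul_assoc a b c
  have h1 : (⋃ x ∈ hmul a b, hmul x c) = smulSet c (hmul a b) := by
    ext w
    simp only [smulSet, Set.mem_iUnion, exists_prop]
    constructor
    · rintro ⟨x, hx, hw⟩; exact ⟨x, hx, by rwa [hmul_comm c x]⟩
    · rintro ⟨x, hx, hw⟩; exact ⟨x, hx, by rwa [hmul_comm x c]⟩
  have h2 : (⋃ x ∈ hmul b c, hmul a x) = smulSet a (hmul b c) := rfl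
  rw [← h2, ← h, h1]

lemma smulSet_hmul_swap (a b x : G) : smulSet a (hmul b x) = smulSet b (hmul a x) := by
  rw [smulSet_hmul_rotate a b x, smulSet_hmul_rotate b a x, hmul_comm a b]

lemma mem_setMul {X Y : Set G} {w : G} :
    w ∈ setMul X Y ↔ ∃ x ∈ X, ∃ y ∈ Y, w ∈ hmul x y := by
  simp [setMul]

lemma setMul_subset_iff {X Y Z : Set G} :
    setMul X Y ⊆ Z ↔ ∀ x ∈ X, ∀ y ∈ Y, hmul x y ⊆ Z := by
  simp [setMul, Set.iUnion₂_subset_iff]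

lemma hmul_subset_setMul {X Y : Set G} {x y : G} (hx : x ∈ X) (hy : y ∈ Y) :
    hmul x y ⊆ setMul X Y :=
  fun w hw => mem_setMul.mpr ⟨x, hx, y, hy, hw⟩

lemma setMul_singleton_left (a : G) (Y : Set G) : setMul {a} Y = smulSet a Y := by
  ext w; simp [mem_setMul, mem_smulSet]

lemma smulSet_subset_setMul {z : G} {W X : Set G} (hz : z ∈ W) :
    smulSet z X ⊆ setMul W X := by
  rw [smulSet_subset_iff]
  exact fun x hx => hmul_subset_setMul hz hx

lemma smulSet_setMul (a : G) (X Y : Set G) :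
    smulSet a (setMul X Y) = setMul (smulSet a X) Y := by
  ext w
  constructor
  · intro hw
    obtain ⟨z, hz, hw⟩ := mem_smulSet.mp hw
    obtain ⟨x, hx, y, hy, hz'⟩ := mem_setMul.mp hz
    have hw2 : w ∈ smulSet y (hmul a x) := by
      rw [← smulSet_hmul_rotate a x y]; exact mem_smulSet.mpr ⟨z, hz', hw⟩
    obtain ⟨v, hv, hw3⟩ := mem_smulSet.mp hw2
    exact mem_setMul.mpr ⟨v, mem_smulSet.mpr ⟨x, hx, hv⟩, y, hy, by rw [hmul_comm v y]; exact hw3⟩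
  · intro hw
    obtain ⟨v, hv, y, hy, hw⟩ := mem_setMul.mp hw
    obtain ⟨x, hx, hv'⟩ := mem_smulSet.mp hv
    have hw2 : w ∈ smulSet y (hmul a x) :=
      mem_smulSet.mpr ⟨v, hv', by rw [← hmul_comm v y]; exact hw⟩
    rw [← smulSet_hmul_rotate a x y] at hw2
    obtain ⟨z, hz, hw3⟩ := mem_smulSet.mp hw2
    exact mem_smulSet.mpr ⟨z, mem_setMul.mpr ⟨x, hx, y, hy, hz⟩, hw3⟩

lemma smulSet_smulSet_comm (a b : G) (X : Set G) :
    smulSet a (smulSet b X) = smulSet b (smulSet a X) := by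
  have key : ∀ (a b : G) (w : G), w ∈ smulSet a (smulSet b X) →
      w ∈ smulSet b (smulSet a X) := by
    intro a b w hw
    obtain ⟨z, hz, hw⟩ := mem_smulSet.mp hw
    obtain ⟨x, hx, hz'⟩ := mem_smulSet.mp hz
    have h1 : w ∈ smulSet a (hmul b x) := mem_smulSet.mpr ⟨z, hz', hw⟩
    rw [smulSet_hmul_swap a b x] at h1
    obtain ⟨z', hz', hw'⟩ := mem_smulSet.mp h1
    exact mem_smulSet.mpr ⟨z', mem_smulSet.mpr ⟨x, hx, hz'⟩, hw'⟩
  ext w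
  exact ⟨key a b w, key b a w⟩

lemma hProd_cons {l : List G} (hl : l ≠ []) (a : G) : hProd (a :: l) = smulSet a (hProd l) := by
  cases l with
  | nil => exact absurd rfl hl
  | cons b m => rfl

lemma hProd_pair (u v : G) : hProd [u, v] = hmul u v := by
  show smulSet u (hProd [v]) = hmul u v
  show smulSet u {v} = hmul u v
  exact smulSet_singleton u v

lemma hProd_nonempty {l : List G} (hl : l ≠ []) : (hProd l).Nonempty := by
  induction l with
  | nil => exact absurd rfl hl
  | cons a m ih =>
    cases m with
    | nil => exact ⟨a, rfl⟩
    | cons b m' =>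
      obtain ⟨x, hx⟩ := ih (by simp)
      obtain ⟨y, hy⟩ := hmul_nonempty a x
      exact ⟨y, mem_smulSet.mpr ⟨x, hx, hy⟩⟩

lemma hProd_perm {l l' : List G} (h : l.Perm l') : hProd l = hProd l' := by
  induction h with
  | nil => rfl
  | cons a h ih =>
    rename_i l₁ l₂
    rcases eq_or_ne l₁ [] with rfl | h₁
    · rw [← h.nil_eq]
    · have h₂ : l₂ ≠ [] := by
        intro hc; subst hc; exact h₁ h.eq_nil
      rw [hProd_cons h₁ a, hProd_cons h₂ a, ih]
  | swap x y l =>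
    cases l with
    | nil =>
      rw [hProd_pair, hProd_pair, hmul_comm]
    | cons b m =>
      have hbm : b :: m ≠ [] := by simp
      show smulSet y (hProd (x :: b :: m)) = smulSet x (hProd (y :: b :: m))
      rw [hProd_cons hbm x, hProd_cons hbm y, smulSet_smulSet_comm]
  | trans _ _ ih1 ih2 => exact ih1.trans ih2

lemma hProd_append {l₁ l₂ : List G} (h₁ : l₁ ≠ []) (h₂ : l₂ ≠ []) :
    hProd (l₁ ++ l₂) = setMul (hProd l₁) (hProd l₂) := by
  induction l₁ with
  | nil => exact absurd rfl h₁
  | cons a m ih =>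
    cases m with
    | nil =>
      show hProd (a :: l₂) = setMul (hProd [a]) (hProd l₂)
      rw [hProd_cons h₂ a]
      show smulSet a (hProd l₂) = setMul {a} (hProd l₂)
      rw [setMul_singleton_left]
    | cons b m' =>
      have hm : b :: m' ≠ [] := by simp
      have happ : (b :: m') ++ l₂ ≠ [] := by simp
      show hProd (a :: ((b :: m') ++ l₂)) = setMul (hProd (a :: b :: m')) (hProd l₂)
      rw [hProd_cons happ a, ih hm, hProd_cons hm a, smulSet_setMul]

lemma replicate_ne_nil' {a : G} {n : ℕ} (hn : 1 ≤ n) : List.replicate n a ≠ [] := by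
  cases n with
  | zero => omega
  | succ m => simp [List.replicate_succ]

lemma hPow_one (a : G) : hPow a 1 = {a} := rfl

lemma hPow_succ (a : G) {n : ℕ} (hn : 1 ≤ n) : hPow a (n + 1) = smulSet a (hPow a n) := by
  show hProd (List.replicate (n + 1) a) = smulSet a (hProd (List.replicate n a))
  rw [List.replicate_succ]
  exact hProd_cons (replicate_ne_nil' hn) a

lemma hPow_nonempty (a : G) {n : ℕ} (hn : 1 ≤ n) : (hPow a n).Nonempty :=
  hProd_nonempty (replicate_ne_nil' hn)

lemma flatten_replicate_ne_nil {l : List G} (hl : l ≠ []) {n : ℕ} (hn : 1 ≤ n) :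
    (List.replicate n l).flatten ≠ [] := by
  cases n with
  | zero => omega
  | succ m =>
    rw [List.replicate_succ, List.flatten_cons]
    simp [hl]

lemma hPow_subset_flatten {z : G} {l : List G} (hz : z ∈ hProd l) (hl : l ≠ []) :
    ∀ {n : ℕ}, 1 ≤ n → hPow z n ⊆ hProd (List.replicate n l).flatten := by
  intro n
  induction n with
  | zero => omega
  | succ m ih =>
    intro _
    rcases Nat.eq_zero_or_pos m with h0 | hm
    · subst h0
      have h1 : (List.replicate 1 l).flatten = l := by simp
      rw [h1, hPow_one]
      simpa using hz
    · have hJ : (List.replicate m l).flatten ≠ [] := flatten_replicate_ne_nil hl hm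
      rw [hPow_succ z hm]
      have step3 : setMul (hProd l) (hProd (List.replicate m l).flatten) =
          hProd (l ++ (List.replicate m l).flatten) := (hProd_append hl hJ).symm
      have step4 : l ++ (List.replicate m l).flatten = (List.replicate (m + 1) l).flatten := by
        rw [List.replicate_succ, List.flatten_cons]
      rw [← step4, ← step3]
      exact (smulSet_mono (ih hm)).trans (smulSet_subset_setMul hz)

lemma flatten_replicate_replicate (m N : ℕ) (w : G) :
    (List.replicate m (List.replicate N w)).flatten = List.replicate (m * N) w := by
  induction m with
  | zero => simp
  | succ k ih =>
    rw [List.replicate_succ, List.flatten_cons, ih, ← List.replicate_add]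
    congr 1
    ring

section Rad

variable {A S : Set G}

lemma mem_rad_of_mem {a : G} (ha : a ∈ A) : a ∈ rad A :=
  ⟨1, le_refl 1, by rw [hPow_one]; simpa using ha⟩

lemma subset_rad : A ⊆ rad A := fun _ ha => mem_rad_of_mem ha

/-- If a hyperproduct meets `rad A` then it is contained in `rad A`. -/
lemma hProd_subset_rad (hA : IsCHyperideal A) {l : List G} (hl : l ≠ [])
    (h : (hProd l ∩ rad A).Nonempty) : hProd l ⊆ rad A := by
  obtain ⟨z, hzl, n, hn, hzn⟩ := h
  have hflat : hProd (List.replicate n l).flatten ⊆ A := by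
    apply hA.2 _ (flatten_replicate_ne_nil hl hn)
    obtain ⟨w, hw⟩ := hPow_nonempty z hn
    exact ⟨w, hPow_subset_flatten hzl hl hn hw, hzn hw⟩
  intro w hw
  exact ⟨n, hn, (hPow_subset_flatten hw hl hn).trans hflat⟩

/-- `rad (rad A) = rad A` in the relevant direction. -/
lemma mem_rad_of_pow (hA : IsCHyperideal A) {w : G} {N : ℕ} (hN : 1 ≤ N)
    (h : (hPow w N ∩ rad A).Nonempty) : w ∈ rad A := by
  have hrep : List.replicate N w ≠ [] := replicate_ne_nil' hN
  obtain ⟨z, hzp, zm, hzm, hzA⟩ := h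
  have h2 : hPow z zm ⊆ hProd (List.replicate (zm * N) w) := by
    have := hPow_subset_flatten (l := List.replicate N w) hzp hrep hzm
    rwa [flatten_replicate_replicate] at this
  have h3 : hProd (List.replicate (zm * N) w) ⊆ A := by
    apply hA.2 _ (replicate_ne_nil' (Nat.mul_pos hzm hN))
    obtain ⟨y, hy⟩ := hPow_nonempty z hzm
    exact ⟨y, h2 hy, hzA hy⟩
  exact ⟨zm * N, Nat.mul_pos hzm hN, h3⟩

lemma replicate_pair_perm (n : ℕ) (u v : G) :
    (List.replicate n ([u, v] : List G)).flatten.Perm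
      (List.replicate n u ++ List.replicate n v) := by
  induction n with
  | zero => simp
  | succ m ih =>
    rw [List.replicate_succ, List.flatten_cons, List.replicate_succ (a := u) (n := m),
      List.replicate_succ (a := v) (n := m)]
    exact List.Perm.cons u ((ih.cons v).trans List.perm_middle.symm)

/-- `rad A` absorbs multiplication. -/
lemma rad_absorb (hA : IsCHyperideal A) {x : G} (hx : x ∈ rad A) (r : G) :
    hmul r x ⊆ rad A := by
  obtain ⟨n, hn, hxn⟩ := hx
  intro w hw
  rw [← hProd_pair r x] at hw
  refine ⟨n, hn, ?_⟩
  have h1 : hPow w n ⊆ hProd (List.replicate n ([r, x] : List G)).flatten :=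
    hPow_subset_flatten hw (by simp) hn
  have h2 : hProd (List.replicate n ([r, x] : List G)).flatten =
      setMul (hPow r n) (hPow x n) := by
    rw [hProd_perm (replicate_pair_perm n r x)]
    exact hProd_append (replicate_ne_nil' hn) (replicate_ne_nil' hn)
  have h3 : setMul (hPow r n) (hPow x n) ⊆ A := by
    rw [setMul_subset_iff]
    intro s _ q hq
    exact hA.1.2.2 s q (hxn hq)
  exact h1.trans (h2 ▸ h3)

lemma smulSet_smulSet_subset_rad (hA : IsCHyperideal A) {t p : G}
    (h : hmul t p ⊆ rad A) (X : Set G) :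
    smulSet t (smulSet p X) ⊆ rad A := by
  intro w hw
  obtain ⟨z, hz, hw⟩ := mem_smulSet.mp hw
  obtain ⟨x, hx, hz'⟩ := mem_smulSet.mp hz
  have h1 : w ∈ smulSet t (hmul p x) := mem_smulSet.mpr ⟨z, hz', hw⟩
  rw [smulSet_hmul_rotate t p x] at h1
  obtain ⟨y, hy, hw'⟩ := mem_smulSet.mp h1
  exact rad_absorb hA (h hy) x hw'

lemma pow_inter_S (hS : IsMCS S) {s : G} (hs : s ∈ S) :
    ∀ {n : ℕ}, 1 ≤ n → (hPow s n ∩ S).Nonempty := by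
  intro n
  induction n with
  | zero => omega
  | succ m ih =>
    intro _
    rcases Nat.eq_zero_or_pos m with h0 | hm
    · subst h0
      exact ⟨s, by rw [hPow_one]; exact rfl, hs⟩
    · obtain ⟨x, hx, hxS⟩ := ih hm
      obtain ⟨y, hy, hyS⟩ := hS.2 s hs x hxS
      refine ⟨y, ?_, hyS⟩
      rw [hPow_succ s hm]
      exact hmul_subset_smulSet hx hy

lemma rad_inter_S (hA : IsCHyperideal A) (hS : IsMCS S) (hAS : A ∩ S = ∅) :
    ∀ s ∈ S, s ∉ rad A := by
  intro s hsS hsr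
  obtain ⟨n, hn, hsn⟩ := hsr
  obtain ⟨x, hx, hxS⟩ := pow_inter_S hS hsS hn
  exact absurd hAS (by
    rw [Set.eq_empty_iff_forall_notMem]
    push_neg
    exact ⟨x, hsn hx, hxS⟩)

/-- Key lemma: `t ∘ uⁿ ⊆ rad A` implies `t ∘ u ⊆ rad A`. -/
lemma hmul_subset_rad_of_pow (hA : IsCHyperideal A) {t u : G} {n : ℕ} (hn : 1 ≤ n)
    (h : smulSet t (hPow u n) ⊆ rad A) : hmul t u ⊆ rad A := by
  intro w hw
  apply mem_rad_of_pow hA hn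
  suffices hsub : hPow w n ⊆ rad A by
    obtain ⟨y, hy⟩ := hPow_nonempty w hn
    exact ⟨y, hy, hsub hy⟩
  rw [← hProd_pair t u] at hw
  have h1 : hPow w n ⊆ hProd (List.replicate n ([t, u] : List G)).flatten :=
    hPow_subset_flatten hw (by simp) hn
  have h2 : hProd (List.replicate n ([t, u] : List G)).flatten =
      setMul (hPow t n) (hPow u n) := by
    rw [hProd_perm (replicate_pair_perm n t u)]
    exact hProd_append (replicate_ne_nil' hn) (replicate_ne_nil' hn)
  refine h1.trans (h2 ▸ ?_)
  rw [setMul_subset_iff]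
  intro s hs p hp
  have htp : hmul t p ⊆ rad A := (hmul_subset_smulSet hp).trans h
  -- s ∘ p ⊆ hProd (replicate n t ++ [p]) and the latter is ⊆ rad A
  have hsp : hmul s p ⊆ hProd (List.replicate n t ++ [p]) := by
    rw [hProd_append (replicate_ne_nil' hn) (by simp)]
    exact hmul_subset_setMul hs (show p ∈ hProd [p] from rfl)
  refine hsp.trans ?_
  obtain ⟨m, rfl⟩ : ∃ m, n = m + 1 := ⟨n - 1, by omega⟩
  have hperm : (List.replicate (m + 1) t ++ [p]).Perm (t :: p :: List.replicate m t) := by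
    rw [List.replicate_succ]
    exact List.Perm.cons t (List.perm_middle.trans (by simp))
  rw [hProd_perm hperm]
  rcases Nat.eq_zero_or_pos m with h0 | hm
  · subst h0
    show hProd [t, p] ⊆ rad A
    rw [hProd_pair]
    exact htp
  · rw [hProd_cons (by simp) t, hProd_cons (replicate_ne_nil' hm) p]
    exact smulSet_smulSet_subset_rad hA htp _

/-- The quasi-S-primary condition lifts to products landing in `rad A`. -/
lemma rad_level (hA : IsCHyperideal A) {t : G}
    (H : ∀ u v : G, hmul u v ⊆ A → hmul t u ⊆ rad A ∨ hmul t v ⊆ rad A)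
    {u v : G} (huv : hmul u v ⊆ rad A) :
    hmul t u ⊆ rad A ∨ hmul t v ⊆ rad A := by
  obtain ⟨z, hz⟩ := hmul_nonempty u v
  obtain ⟨n, hn, hzn⟩ := huv hz
  rw [← hProd_pair u v] at hz
  have base : setMul (hPow u n) (hPow v n) ⊆ A := by
    have h2 : hProd (List.replicate n ([u, v] : List G)).flatten =
        setMul (hPow u n) (hPow v n) := by
      rw [hProd_perm (replicate_pair_perm n u v)]
      exact hProd_append (replicate_ne_nil' hn) (replicate_ne_nil' hn)
    rw [← h2]
    apply hA.2 _ (flatten_replicate_ne_nil (by simp) hn)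
    obtain ⟨y, hy⟩ := hPow_nonempty z hn
    exact ⟨y, hPow_subset_flatten hz (by simp) hn hy, hzn hy⟩
  have hbin : ∀ p ∈ hPow u n, ∀ q ∈ hPow v n, hmul p q ⊆ A := by
    rw [← setMul_subset_iff]; exact base
  by_cases hcase : ∀ p ∈ hPow u n, hmul t p ⊆ rad A
  · left
    exact hmul_subset_rad_of_pow hA hn (smulSet_subset_iff.mpr hcase)
  · push_neg at hcase
    obtain ⟨p₀, hp₀, hnp₀⟩ := hcase
    right
    apply hmul_subset_rad_of_pow hA hn
    rw [smulSet_subset_iff]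
    intro q hq
    exact (H p₀ q (hbin p₀ hp₀ q hq)).resolve_left hnp₀

lemma list_claim (hA : IsCHyperideal A) (hS : IsMCS S) (hAS : A ∩ S = ∅)
    {t : G} (ht : t ∈ S)
    (H : ∀ u v : G, hmul u v ⊆ A → hmul t u ⊆ rad A ∨ hmul t v ⊆ rad A) :
    ∀ l : List G, l ≠ [] → smulSet t (hProd l) ⊆ rad A → ∃ u ∈ l, hmul t u ⊆ rad A := by
  intro l
  induction l with
  | nil => intro h; exact absurd rfl h
  | cons b l' ih =>
    intro _ h
    rcases eq_or_ne l' [] with rfl | hl'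
    · refine ⟨b, by simp, ?_⟩
      rwa [show hProd [b] = {b} from rfl, smulSet_singleton] at h
    · rw [hProd_cons hl' b] at h
      by_cases hw : ∀ w ∈ hProd l', hmul t w ⊆ rad A
      · obtain ⟨u, hu, htu⟩ := ih hl' (smulSet_subset_iff.mpr hw)
        exact ⟨u, by simp [hu], htu⟩
      · push_neg at hw
        obtain ⟨w₀, hw₀, hnt⟩ := hw
        have hx : ∀ x ∈ hmul t b, hmul t x ⊆ rad A := by
          intro x hxm
          have hxw : hmul x w₀ ⊆ rad A := by
            intro y hy
            have h1 : y ∈ smulSet w₀ (hmul t b) := mem_smulSet.mpr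
              ⟨x, hxm, by rw [← hmul_comm x w₀]; exact hy⟩
            rw [← smulSet_hmul_rotate t b w₀] at h1
            exact h ((smulSet_mono (hmul_subset_smulSet hw₀)) h1)
          exact (rad_level hA H hxw).resolve_right hnt
        -- Now smulSet t (hmul t b) ⊆ rad A, i.e. (t∘t)∘b ⊆ rad A
        have h2 : ∀ y ∈ hmul t t, hmul b y ⊆ rad A := by
          intro y hy
          have : hmul b y ⊆ smulSet b (hmul t t) := hmul_subset_smulSet hy
          refine this.trans ?_
          rw [smulSet_hmul_swap b t t, hmul_comm b t]
          exact smulSet_subset_iff.mpr hx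
        obtain ⟨s₁, hs₁m, hs₁S⟩ := hS.2 t ht t ht
        rcases rad_level hA H (h2 s₁ hs₁m) with hb | hs
        · exact ⟨b, by simp, hb⟩
        · obtain ⟨s₂, hs₂m, hs₂S⟩ := hS.2 t ht s₁ hs₁S
          exact absurd (hs hs₂m) (by
            intro hc
            exact rad_inter_S hA hS hAS s₂ hs₂S hc)

end Rad

end Aux

open MulHyperring in
theorem quasiSPrimary_iff_finite_products {G : Type*} [MulHyperring G] (A S : Set G) (hA : IsCHyperideal A)
    (hS : IsMCS S) (hAS : A ∩ S = ∅) :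
    IsQuasiSPrimary S A ↔
      ∃ t ∈ S, ∀ l : List G, l ≠ [] → hProd l ⊆ A → ∃ u ∈ l, hmul t u ⊆ rad A := by
  constructor
  · rintro ⟨hI, -, t, htS, H⟩
    refine ⟨t, htS, ?_⟩
    intro l hl hlA
    cases l with
    | nil => exact absurd rfl hl
    | cons a l' =>
      rcases eq_or_ne l' [] with rfl | hl'
      · refine ⟨a, by simp, ?_⟩
        have ha : a ∈ A := hlA rfl
        exact (hA.1.2.2 t a ha).trans subset_rad
      · rw [hProd_cons hl' a] at hlA
        by_cases hta : hmul t a ⊆ rad A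
        · exact ⟨a, by simp, hta⟩
        · have hv : ∀ v ∈ hProd l', hmul t v ⊆ rad A := by
            intro v hv
            exact (H a v ((hmul_subset_smulSet hv).trans hlA)).resolve_left hta
          obtain ⟨u, hu, htu⟩ :=
            list_claim hA hS hAS htS H l' hl' (smulSet_subset_iff.mpr hv)
          exact ⟨u, by simp [hu], htu⟩
  · rintro ⟨t, htS, H⟩
    refine ⟨hA.1, hAS, t, htS, ?_⟩
    intro u v huv
    obtain ⟨w, hw, htw⟩ := H [u, v] (by simp) (by rw [hProd_pair]; exact huv)
    simp only [List.mem_cons, List.mem_singleton, List.not_mem_nil, or_false] at hw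
    rcases hw with rfl | rfl
    · exact Or.inl htw
    · exact Or.inr htw
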